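/- Let x* ∈ ℝⁿ with support J = supp(x*). Suppose there exist real numbers a_j, j ∈ J, such that the vector v = Σ_{j∈J} a_j W⁻¹ P e_j satisfies (C.1): v_i = sgn(x*_i) for all i ∈ J, and (C.2): v_i ∈ (−1, 1) for all i ∉ J. Let α > 0 be such that sgn(x*_j − α a_j) = sgn(x*_j) for all j ∈ J. Then y*_α = Σ_{j∈J} (x*_j − α a_j) e_j is the UNIQUE minimizer of T_α(x) = ½ ‖P x − P x*‖₂² + α Σ_{i=1}^n w_i |x_i| if and only if A is injective on the support of x*, i.e., the only q ∈ ℝⁿ with supp(q) ⊆ supp(x*) and A q = 0 is q = 0. -/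

import Mathlib

open scoped RealInnerProductSpace Classical

/-- The `i`-th standard basis vector of `ℝⁿ`. -/
noncomputable def stdBasis (n : ℕ) (i : Fin n) : EuclideanSpace ℝ (Fin n) :=
  EuclideanSpace.single i 1

/-- `P`: the orthogonal projection of `ℝⁿ` onto the orthogonal complement of `ker A`
(this equals `A†A` for the Moore–Penrose pseudoinverse `A†`). -/
noncomputable def proj {m n : ℕ} (A : EuclideanSpace ℝ (Fin n) →ₗ[ℝ] EuclideanSpace ℝ (Fin m))
    (x : EuclideanSpace ℝ (Fin n)) : EuclideanSpace ℝ (Fin n) :=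
  (Submodule.orthogonalProjectionOnto (LinearMap.ker A)ᗮ x : EuclideanSpace ℝ (Fin n))

/-- The weights `w i = ‖P e_i‖₂`. -/
noncomputable def wgt {m n : ℕ} (A : EuclideanSpace ℝ (Fin n) →ₗ[ℝ] EuclideanSpace ℝ (Fin m))
    (i : Fin n) : ℝ :=
  ‖proj A (stdBasis n i)‖

/-- The weighted ℓ¹ norm `‖W x‖₁ = ∑ i, w i * |x i|`. -/
noncomputable def wl1 {m n : ℕ} (A : EuclideanSpace ℝ (Fin n) →ₗ[ℝ] EuclideanSpace ℝ (Fin m))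
    (x : EuclideanSpace ℝ (Fin n)) : ℝ :=
  ∑ i, wgt A i * |x i|

section helpers
variable {m n : ℕ} (A : EuclideanSpace ℝ (Fin n) →ₗ[ℝ] EuclideanSpace ℝ (Fin m))

lemma sum_apply' {k : ℕ} (s : Finset (Fin k)) (f : Fin k → EuclideanSpace ℝ (Fin n)) (i : Fin n) :
    (∑ j ∈ s, f j) i = ∑ j ∈ s, f j i := by
  induction s using Finset.cons_induction with
  | empty => rfl
  | cons j s hj ih => rw [Finset.sum_cons, Finset.sum_cons, ← ih]; rfl

lemma proj_inner (x z : EuclideanSpace ℝ (Fin n)) : ⟪proj A x, proj A z⟫ = ⟪proj A x, z⟫ := by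
  have h1 : z - proj A z ∈ ((LinearMap.ker A)ᗮ)ᗮ := Submodule.sub_starProjection_mem_orthogonal (K := (LinearMap.ker A)ᗮ) z
  have h2 := (Submodule.orthogonalProjectionOnto (LinearMap.ker A)ᗮ x).2
  have h3 := Submodule.inner_right_of_mem_orthogonal h2 h1
  rw [inner_sub_right, sub_eq_zero] at h3
  exact (h3).symm

lemma proj_eq_zero_iff (z : EuclideanSpace ℝ (Fin n)) : proj A z = 0 ↔ A z = 0 := by
  rw [proj]
  rw [show ((Submodule.orthogonalProjectionOnto (LinearMap.ker A)ᗮ z : EuclideanSpace ℝ (Fin n)) = 0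
      ↔ Submodule.orthogonalProjectionOnto (LinearMap.ker A)ᗮ z = 0) from Submodule.coe_eq_zero]
  rw [Submodule.orthogonalProjectionOnto_eq_zero_iff, Submodule.orthogonal_orthogonal]
  exact LinearMap.mem_ker

lemma inner_eq_sum (u z : EuclideanSpace ℝ (Fin n)) : ⟪u, z⟫ = ∑ i, u i * z i := by
  simp [PiLp.inner_apply, RCLike.inner_apply, mul_comm]

lemma wgt_pos (hA : ∀ i, stdBasis n i ∉ LinearMap.ker A) (i : Fin n) : 0 < wgt A i := by
  rw [wgt, norm_pos_iff]
  intro h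
  exact hA i (LinearMap.mem_ker.2 ((proj_eq_zero_iff A _).1 h))

lemma proj_sub (x y : EuclideanSpace ℝ (Fin n)) : proj A (x - y) = proj A x - proj A y := by
  simp [proj, map_sub]

lemma proj_smul (c : ℝ) (x : EuclideanSpace ℝ (Fin n)) : proj A (c • x) = c • proj A x := by
  simp [proj, map_smul]

lemma proj_sum {k : ℕ} (s : Finset (Fin k)) (f : Fin k → EuclideanSpace ℝ (Fin n)) :
    proj A (∑ j ∈ s, f j) = ∑ j ∈ s, proj A (f j) := by
  simp [proj, map_sum]

lemma sign_mul_self' (r : ℝ) : Real.sign r * r = |r| := by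
  rcases lt_trichotomy r 0 with h|h|h
  · rw [Real.sign_of_neg h, abs_of_neg h]; ring
  · simp [h]
  · rw [Real.sign_of_pos h, abs_of_pos h]; ring

lemma abs_sign_le (r : ℝ) : |Real.sign r| ≤ 1 := by
  rcases lt_trichotomy r 0 with h|h|h
  · rw [Real.sign_of_neg h]; norm_num
  · simp [h]
  · rw [Real.sign_of_pos h]; norm_num

lemma abs_term_nonneg {c t : ℝ} (hc : |c| ≤ 1) : 0 ≤ |t| - c * t := by
  have h1 : c * t ≤ |c * t| := le_abs_self _
  have h2 : |c * t| = |c| * |t| := abs_mul c t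
  nlinarith [abs_nonneg t]

lemma abs_term_pos {c t : ℝ} (hc : |c| < 1) (ht : t ≠ 0) : 0 < |t| - c * t := by
  have h1 : c * t ≤ |c * t| := le_abs_self _
  have h2 : |c * t| = |c| * |t| := abs_mul c t
  have h3 : 0 < |t| := abs_pos.2 ht
  nlinarith

lemma abs_add_small {s h : ℝ} (hs : |h| < |s|) : |s + h| = |s| + Real.sign s * h := by
  rcases lt_trichotomy s 0 with hlt|heq|hgt
  · rw [abs_of_neg hlt] at hs
    have : s + h < 0 := by cases abs_lt.1 hs; linarith
    rw [abs_of_neg this, abs_of_neg hlt, Real.sign_of_neg hlt]; ring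
  · simp [heq] at hs; linarith [abs_nonneg h]
  · rw [abs_of_pos hgt] at hs
    have : 0 < s + h := by cases abs_lt.1 hs; linarith
    rw [abs_of_pos this, abs_of_pos hgt, Real.sign_of_pos hgt]; ring

end helpers

theorem stmt8 {m n : ℕ}
    (A : EuclideanSpace ℝ (Fin n) →ₗ[ℝ] EuclideanSpace ℝ (Fin m))
    (hA : ∀ i, stdBasis n i ∉ LinearMap.ker A)
    (xstar : EuclideanSpace ℝ (Fin n)) (a : Fin n → ℝ) (v : Fin n → ℝ)
    (hv : ∀ i, v i = ∑ j ∈ Finset.univ.filter (fun j => xstar j ≠ 0),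
      a j * ((wgt A i)⁻¹ * proj A (stdBasis n j) i))
    (hC1 : ∀ i, xstar i ≠ 0 → v i = Real.sign (xstar i))
    (hC2 : ∀ i, xstar i = 0 → v i ∈ Set.Ioo (-1 : ℝ) 1)
    (α : ℝ) (hα : 0 < α)
    (hsgn : ∀ j, xstar j ≠ 0 → Real.sign (xstar j - α * a j) = Real.sign (xstar j))
    (ystar : EuclideanSpace ℝ (Fin n))
    (hy : ystar = ∑ j ∈ Finset.univ.filter (fun j => xstar j ≠ 0),
      (xstar j - α * a j) • stdBasis n j)
 :
    ((∀ x : EuclideanSpace ℝ (Fin n),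
        (1 / 2) * ‖proj A ystar - proj A xstar‖ ^ 2 + α * wl1 A ystar ≤ (1 / 2) * ‖proj A x - proj A xstar‖ ^ 2 + α * wl1 A x) ∧
      ∀ y : EuclideanSpace ℝ (Fin n),
        (∀ x : EuclideanSpace ℝ (Fin n),
          (1 / 2) * ‖proj A y - proj A xstar‖ ^ 2 + α * wl1 A y ≤ (1 / 2) * ‖proj A x - proj A xstar‖ ^ 2 + α * wl1 A x) → y = ystar) ↔
    (∀ q : EuclideanSpace ℝ (Fin n), (∀ i, q i ≠ 0 → xstar i ≠ 0) → A q = 0 → q = 0) := by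
  set J := Finset.univ.filter (fun j => xstar j ≠ 0) with hJ
  -- pointwise description of ystar
  have hystar_apply : ∀ i, ystar i = if xstar i ≠ 0 then xstar i - α * a i else 0 := by
    intro i
    rw [hy, sum_apply']
    simp only [PiLp.smul_apply, stdBasis, EuclideanSpace.single_apply, smul_eq_mul, mul_ite,
      mul_one, mul_zero]
    rw [Finset.sum_ite_eq J i (fun j => xstar j - α * a j)]
    simp [hJ]
  have hyJ : ∀ i, xstar i ≠ 0 → ystar i = xstar i - α * a i := by
    intro i hi; rw [hystar_apply i, if_pos hi]
  have hyJc : ∀ i, xstar i = 0 → ystar i = 0 := by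
    intro i hi; rw [hystar_apply i, if_neg (by simp [hi])]
  have hsign_ystar : ∀ i, xstar i ≠ 0 → Real.sign (ystar i) = v i := by
    intro i hi; rw [hyJ i hi, hsgn i hi, hC1 i hi]
  have hystar_ne : ∀ i, xstar i ≠ 0 → ystar i ≠ 0 := by
    intro i hi h0
    have h1 : Real.sign (xstar i) = 0 := by
      rw [← hC1 i hi, ← hsign_ystar i hi, h0, Real.sign_zero]
    exact hi (Real.sign_eq_zero_iff.1 h1)
  have hwv : ∀ i, wgt A i * v i = ∑ j ∈ J, a j * proj A (stdBasis n j) i := by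
    intro i
    rw [hv i, Finset.mul_sum]
    refine Finset.sum_congr rfl fun j _ => ?_
    have hw := wgt_pos A hA i
    field_simp
  have hdiff : ystar - xstar = ∑ j ∈ J, (-(α * a j)) • stdBasis n j := by
    ext i
    have hrhs : (∑ j ∈ J, (-(α * a j)) • stdBasis n j) i = ∑ j ∈ J, (-(α * a j)) * (stdBasis n j i) := by
      rw [sum_apply']; rfl
    show ystar i - xstar i = _
    rw [hrhs]
    simp only [stdBasis, EuclideanSpace.single_apply, mul_ite, mul_one, mul_zero]
    rw [Finset.sum_ite_eq J i (fun j => -(α * a j))]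
    by_cases hi : xstar i ≠ 0
    · rw [if_pos (by simp [hJ, hi]), hyJ i hi]; ring
    · push_neg at hi
      rw [if_neg (by simp [hJ, hi]), hyJc i hi, hi]; ring
  have hPdiff : ∀ i, (proj A (ystar - xstar)) i = -(α * (wgt A i * v i)) := by
    intro i
    rw [hdiff, proj_sum, sum_apply']
    have : ∀ j ∈ J, (proj A ((-(α * a j)) • stdBasis n j)) i = -(α * (a j * proj A (stdBasis n j) i)) := by
      intro j _
      rw [proj_smul]
      show (-(α * a j)) * (proj A (stdBasis n j) i) = _
      ring
    rw [Finset.sum_congr rfl this, hwv i, Finset.mul_sum, ← Finset.sum_neg_distrib]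
  have keyinner : ∀ z : EuclideanSpace ℝ (Fin n),
      ⟪proj A ystar - proj A xstar, proj A z⟫ = -(α * ∑ i, wgt A i * v i * z i) := by
    intro z
    rw [← proj_sub, proj_inner, inner_eq_sum]
    have : ∀ i ∈ Finset.univ, (proj A (ystar - xstar)) i * z i
        = -(α * (wgt A i * v i * z i)) := by
      intro i _
      rw [hPdiff i]; ring
    rw [Finset.sum_congr rfl this, Finset.mul_sum, ← Finset.sum_neg_distrib]
  have keyId : ∀ y : EuclideanSpace ℝ (Fin n),
      (1 / 2) * ‖proj A y - proj A xstar‖ ^ 2 + α * wl1 A y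
        = ((1 / 2) * ‖proj A ystar - proj A xstar‖ ^ 2 + α * wl1 A ystar)
          + ((1 / 2) * ‖proj A y - proj A ystar‖ ^ 2
            + α * ∑ i, wgt A i * (|y i| - |ystar i| - v i * (y i - ystar i))) := by
    intro y
    have h0 : proj A y - proj A xstar
        = (proj A ystar - proj A xstar) + (proj A y - proj A ystar) := by abel
    rw [h0, norm_add_sq_real]
    have hips : ⟪proj A ystar - proj A xstar, proj A y - proj A ystar⟫
        = -(α * ∑ i, wgt A i * v i * (y i - ystar i)) := by
      have h := keyinner (y - ystar)
      rw [proj_sub] at h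
      exact h
    rw [hips]
    unfold wl1
    have hsplit : ∑ i, wgt A i * (|y i| - |ystar i| - v i * (y i - ystar i))
        = (∑ i, wgt A i * |y i|) - (∑ i, wgt A i * |ystar i|)
          - ∑ i, wgt A i * v i * (y i - ystar i) := by
      rw [← Finset.sum_sub_distrib, ← Finset.sum_sub_distrib]
      exact Finset.sum_congr rfl fun i _ => by ring
    rw [hsplit]
    ring
  have termNonneg : ∀ (y : EuclideanSpace ℝ (Fin n)) (i : Fin n),
      0 ≤ wgt A i * (|y i| - |ystar i| - v i * (y i - ystar i)) := by
    intro y i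
    apply mul_nonneg (wgt_pos A hA i).le
    by_cases hx : xstar i ≠ 0
    · have hv' : v i = Real.sign (ystar i) := (hsign_ystar i hx).symm
      have h2 : |ystar i| = v i * ystar i := by rw [hv', sign_mul_self']
      have h1 : 0 ≤ |y i| - v i * y i :=
        abs_term_nonneg (by rw [hv']; exact abs_sign_le _)
      nlinarith
    · push_neg at hx
      have h0 := hyJc i hx
      have h2 : |v i| ≤ 1 := by
        have := hC2 i hx
        have := abs_lt.2 ⟨this.1, this.2⟩
        linarith
      have h1 : 0 ≤ |y i| - v i * y i := abs_term_nonneg h2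
      rw [h0]
      simpa using h1
  constructor
  · -- unique minimizer → injective on support
    rintro ⟨hmin, huniq⟩ q hsupp hAq
    by_contra hq0
    have hiq : ∃ i, q i ≠ 0 := by
      by_contra h
      push_neg at h
      exact hq0 (by ext i; exact h i)
    obtain ⟨i0, hi0⟩ := hiq
    have hne : (Finset.univ : Finset (Fin n)).Nonempty := ⟨i0, Finset.mem_univ i0⟩
    set f : Fin n → ℝ := fun i =>
      if xstar i ≠ 0 ∧ q i ≠ 0 then |ystar i| / (2 * |q i|) else 1 with hf
    set ε := Finset.univ.inf' hne f with hε
    have hεpos : 0 < ε := by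
      rw [hε, Finset.lt_inf'_iff]
      intro i _
      show (0:ℝ) < if xstar i ≠ 0 ∧ q i ≠ 0 then |ystar i| / (2 * |q i|) else 1
      by_cases h : xstar i ≠ 0 ∧ q i ≠ 0
      · rw [if_pos h]
        exact div_pos (abs_pos.2 (hystar_ne i h.1))
          (by have := abs_pos.2 h.2; linarith)
      · rw [if_neg h]; norm_num
    have hεsmall : ∀ i, q i ≠ 0 → |ε * q i| < |ystar i| := by
      intro i hqi
      have hx := hsupp i hqi
      have h1 : ε ≤ |ystar i| / (2 * |q i|) := by
        have h2 : ε ≤ f i := Finset.inf'_le f (Finset.mem_univ i)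
        have hfi : f i = |ystar i| / (2 * |q i|) := if_pos (⟨hx, hqi⟩ : xstar i ≠ 0 ∧ q i ≠ 0)
        rwa [hfi] at h2
      have hq1 : 0 < |q i| := abs_pos.2 hqi
      have hy1 : 0 < |ystar i| := abs_pos.2 (hystar_ne i hx)
      rw [abs_mul, abs_of_pos hεpos]
      rw [le_div_iff₀ (by positivity)] at h1
      nlinarith
    set y : EuclideanSpace ℝ (Fin n) := ystar + ε • q with hydef
    have hysub : y - ystar = ε • q := by rw [hydef]; abel
    have hyi : ∀ i, y i = ystar i + ε * q i := fun i => rfl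
    have hTy : (1 / 2) * ‖proj A y - proj A xstar‖ ^ 2 + α * wl1 A y
        = (1 / 2) * ‖proj A ystar - proj A xstar‖ ^ 2 + α * wl1 A ystar := by
      rw [keyId y]
      have hz1 : proj A y - proj A ystar = 0 := by
        rw [← proj_sub, hysub, proj_smul, (proj_eq_zero_iff A q).2 hAq, smul_zero]
      have hz2 : ∑ i, wgt A i * (|y i| - |ystar i| - v i * (y i - ystar i)) = 0 := by
        apply Finset.sum_eq_zero
        intro i _
        by_cases hqi : q i = 0
        · rw [hyi i, hqi]; ring_nf
        · have hx := hsupp i hqi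
          have habs : |ystar i + ε * q i| = |ystar i| + Real.sign (ystar i) * (ε * q i) :=
            abs_add_small (hεsmall i hqi)
          rw [hyi i, habs, hsign_ystar i hx]
          ring
      rw [hz1, hz2]
      simp
    have hymin : ∀ x : EuclideanSpace ℝ (Fin n),
        (1 / 2) * ‖proj A y - proj A xstar‖ ^ 2 + α * wl1 A y
          ≤ (1 / 2) * ‖proj A x - proj A xstar‖ ^ 2 + α * wl1 A x := by
      intro x
      rw [hTy]
      exact hmin x
    have := huniq y hymin
    rw [hydef] at this
    have : ε • q = 0 := by
      have h := congrArg (fun z => z - ystar) this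
      simpa using h
    rcases smul_eq_zero.1 this with h|h
    · exact absurd h (ne_of_gt hεpos)
    · exact hq0 h
  · -- injective on support → unique minimizer
    intro hinj
    have hminy : ∀ x : EuclideanSpace ℝ (Fin n),
        (1 / 2) * ‖proj A ystar - proj A xstar‖ ^ 2 + α * wl1 A ystar
          ≤ (1 / 2) * ‖proj A x - proj A xstar‖ ^ 2 + α * wl1 A x := by
      intro x
      rw [keyId x]
      have h1 : 0 ≤ ‖proj A x - proj A ystar‖ ^ 2 := sq_nonneg _
      have h2 : 0 ≤ ∑ i, wgt A i * (|x i| - |ystar i| - v i * (x i - ystar i)) :=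
        Finset.sum_nonneg fun i _ => termNonneg x i
      nlinarith
    refine ⟨hminy, ?_⟩
    intro y hminy'
    have h1 := hminy' ystar
    rw [keyId y] at h1
    have h2 : 0 ≤ ‖proj A y - proj A ystar‖ ^ 2 := sq_nonneg _
    have h3 : 0 ≤ ∑ i, wgt A i * (|y i| - |ystar i| - v i * (y i - ystar i)) :=
      Finset.sum_nonneg fun i _ => termNonneg y i
    have hz1 : ‖proj A y - proj A ystar‖ ^ 2 = 0 := by nlinarith
    have hz2 : ∑ i, wgt A i * (|y i| - |ystar i| - v i * (y i - ystar i)) = 0 := by nlinarith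
    have hPy : proj A (y - ystar) = 0 := by
      rw [proj_sub, sub_eq_zero]
      have := pow_eq_zero_iff (n := 2) (by norm_num) |>.1 hz1
      rw [norm_eq_zero, sub_eq_zero] at this
      exact this
    have hAq : A (y - ystar) = 0 := (proj_eq_zero_iff A _).1 hPy
    have heach := (Finset.sum_eq_zero_iff_of_nonneg
      (fun i _ => termNonneg y i)).1 hz2
    have hsupp : ∀ i, (y - ystar) i ≠ 0 → xstar i ≠ 0 := by
      intro i hqi
      by_contra hx
      have hy0 := hyJc i hx
      have hyne : y i ≠ 0 := by
        intro h
        apply hqi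
        show y i - ystar i = 0
        rw [h, hy0, sub_zero]
      have hvlt : |v i| < 1 := by
        have := hC2 i hx
        exact abs_lt.2 ⟨this.1, this.2⟩
      have hpos : 0 < |y i| - v i * y i := abs_term_pos hvlt hyne
      have := heach i (Finset.mem_univ i)
      rw [hy0] at this
      have hw := wgt_pos A hA i
      simp only [abs_zero, sub_zero] at this
      nlinarith
    have := hinj (y - ystar) hsupp hAq
    have h := congrArg (fun z => z + ystar) this
    simpa using h
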